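/- Let 0 < q < 1/2, p = 1 - q, λ = q/p, and for integer z ≥ 1 define P(z,κ) = 1 - Q(z, κzλ) + λ^z e^{κz(1-λ)} Q(z, κz), where Q(z,x) = e^{-x}∑_{k=0}^{z-1} x^k/k!. Then ∂P/∂κ (z,κ) = λ^z z(1-λ) e^{z(1-λ)κ} Γ(z, zκ)/Γ(z) > 0 for all κ > 0; in particular κ ↦ P(z,κ) is strictly increasing on (0,∞). -/

import Mathlib

open Real MeasureTheory

/-- Regularized upper incomplete gamma function at integer first argument,
as a finite sum. -/
noncomputable def Qsum (z : ℕ) (x : ℝ) : ℝ :=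
  Real.exp (-x) * ∑ k ∈ Finset.range z, x ^ k / (Nat.factorial k : ℝ)

/-- Upper incomplete gamma function. -/
noncomputable def upperGamma (z x : ℝ) : ℝ :=
  ∫ t in Set.Ioi x, t ^ (z - 1) * Real.exp (-t)

/-- The double spend success probability conditional to deviation κ. -/
noncomputable def Pzκ (lam : ℝ) (z : ℕ) (κ : ℝ) : ℝ :=
  1 - Qsum z (κ * z * lam) + lam ^ z * Real.exp (κ * z * (1 - lam)) * Qsum z (κ * z)

lemma qsum_deriv (m : ℕ) (x : ℝ) :
    HasDerivAt (Qsum (m+1)) (-(Real.exp (-x) * x ^ m / (Nat.factorial m : ℝ))) x := by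
  have hS : HasDerivAt (fun x : ℝ => ∑ k ∈ Finset.range (m+1), x ^ k / (Nat.factorial k : ℝ))
      (∑ k ∈ Finset.range m, x ^ k / (Nat.factorial k : ℝ)) x := by
    have h : HasDerivAt (fun x : ℝ => ∑ k ∈ Finset.range (m+1), x ^ k / (Nat.factorial k : ℝ))
        (∑ k ∈ Finset.range (m+1), (k : ℝ) * x ^ (k-1) / (Nat.factorial k : ℝ)) x := by
      apply HasDerivAt.fun_sum
      intro k _
      simpa [div_eq_mul_inv] using (hasDerivAt_pow k x).mul_const ((Nat.factorial k : ℝ))⁻¹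
    convert h using 1
    rw [Finset.sum_range_succ' (fun k => (k : ℝ) * x ^ (k-1) / (Nat.factorial k : ℝ)) m]
    simp only [Nat.cast_zero, zero_mul, zero_div, add_zero, Nat.add_sub_cancel]
    apply Finset.sum_congr rfl
    intro k _
    rw [Nat.factorial_succ, Nat.cast_mul, Nat.cast_add, Nat.cast_one]
    field_simp
  have hE : HasDerivAt (fun x : ℝ => Real.exp (-x)) (-Real.exp (-x)) x := by
    simpa using (hasDerivAt_neg x).exp
  have := hE.mul hS
  unfold Qsum
  refine this.congr_deriv ?_
  rw [Finset.sum_range_succ]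
  ring

lemma upperGamma_eq (z : ℕ) (hz : 1 ≤ z) (x : ℝ) (hx : 0 < x) :
    upperGamma (z : ℝ) x = (Nat.factorial (z-1) : ℝ) * Qsum z x := by
  obtain ⟨m, rfl⟩ := Nat.exists_eq_add_of_le hz
  simp only [Nat.add_sub_cancel, add_comm 1 m] at *
  have key : (∫ t in Set.Ioi x, t ^ m * Real.exp (-t)) =
      0 - (-(Nat.factorial m : ℝ) * Qsum (m+1) x) := by
    apply integral_Ioi_of_hasDerivAt_of_tendsto
    · exact ((qsum_deriv m x).const_mul (-(Nat.factorial m : ℝ))).continuousAt.continuousWithinAt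
    · intro t _
      have := (qsum_deriv m t).const_mul (-(Nat.factorial m : ℝ))
      refine this.congr_deriv ?_
      have : (Nat.factorial m : ℝ) ≠ 0 := Nat.cast_ne_zero.2 (Nat.factorial_ne_zero m)
      field_simp
    · have h := Real.GammaIntegral_convergent (s := (m+1 : ℝ)) (by positivity)
      have h2 : IntegrableOn (fun t : ℝ => Real.exp (-t) * t ^ ((m+1 : ℝ) - 1)) (Set.Ioi x) :=
        h.mono_set (Set.Ioi_subset_Ioi hx.le)
      apply h2.congr_fun ?_ measurableSet_Ioi
      intro t _
      have h3 : ((m+1 : ℝ) - 1) = ((m : ℕ) : ℝ) := by push_cast; ring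
      simp only [h3, Real.rpow_natCast]
      ring
    · have : Filter.Tendsto (fun t : ℝ => -(Nat.factorial m : ℝ) * Qsum (m+1) t)
          Filter.atTop (nhds 0) := by
        have hsum : Filter.Tendsto (fun t : ℝ => Qsum (m+1) t) Filter.atTop (nhds 0) := by
          have : ∀ t : ℝ, Qsum (m+1) t = ∑ k ∈ Finset.range (m+1),
              (t ^ k * Real.exp (-t)) / (Nat.factorial k : ℝ) := by
            intro t; unfold Qsum; rw [Finset.mul_sum]; congr 1; ext k; ring
          simp only [this]
          have h0 : Filter.Tendsto (fun t : ℝ => ∑ k ∈ Finset.range (m+1),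
              (t ^ k * Real.exp (-t)) / (Nat.factorial k : ℝ)) Filter.atTop
              (nhds (∑ k ∈ Finset.range (m+1), 0 / (Nat.factorial k : ℝ))) := by
            apply tendsto_finset_sum
            intro k _
            exact (tendsto_pow_mul_exp_neg_atTop_nhds_zero k).div_const _
          simpa using h0
        simpa using hsum.const_mul (-(Nat.factorial m : ℝ))
      exact this
  unfold upperGamma
  have hexp : ((m + 1 : ℕ) : ℝ) - 1 = ((m : ℕ) : ℝ) := by push_cast; ring
  calc (∫ t in Set.Ioi x, t ^ (((m+1 : ℕ) : ℝ) - 1) * Real.exp (-t))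
      = ∫ t in Set.Ioi x, t ^ m * Real.exp (-t) := by
        congr 1; ext t; rw [hexp, Real.rpow_natCast]
    _ = (Nat.factorial m : ℝ) * Qsum (m+1) x := by rw [key]; ring

lemma pz_hasDerivAt (lam : ℝ) (m : ℕ) (κ : ℝ) :
    HasDerivAt (fun κ => Pzκ lam (m+1) κ)
      (lam ^ (m+1) * ((m+1:ℕ):ℝ) * (1 - lam) * Real.exp (κ * ((m+1:ℕ):ℝ) * (1 - lam)) *
        Qsum (m+1) (κ * ((m+1:ℕ):ℝ))) κ := by
  set c : ℝ := ((m+1:ℕ):ℝ) with hc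
  have h1 : HasDerivAt (fun κ : ℝ => Qsum (m+1) (κ * c * lam))
      (-(Real.exp (-(κ * c * lam)) * (κ * c * lam) ^ m / (Nat.factorial m : ℝ)) * (c * lam)) κ := by
    have hg : HasDerivAt (fun κ : ℝ => κ * c * lam) (c * lam) κ := by
      simpa using ((hasDerivAt_id κ).mul_const c).mul_const lam
    exact (qsum_deriv m (κ * c * lam)).comp κ hg
  have h2 : HasDerivAt (fun κ : ℝ => Real.exp (κ * c * (1 - lam)))
      (Real.exp (κ * c * (1 - lam)) * (c * (1 - lam))) κ := by
    have hg : HasDerivAt (fun κ : ℝ => κ * c * (1 - lam)) (c * (1 - lam)) κ := by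
      simpa using ((hasDerivAt_id κ).mul_const c).mul_const (1 - lam)
    exact (Real.hasDerivAt_exp (κ * c * (1 - lam))).comp κ hg
  have h3 : HasDerivAt (fun κ : ℝ => Qsum (m+1) (κ * c))
      (-(Real.exp (-(κ * c)) * (κ * c) ^ m / (Nat.factorial m : ℝ)) * c) κ := by
    have hg : HasDerivAt (fun κ : ℝ => κ * c) c κ := by
      simpa using (hasDerivAt_id κ).mul_const c
    exact (qsum_deriv m (κ * c)).comp κ hg
  have hE := h2.const_mul (lam ^ (m+1))
  have hfull := ((hasDerivAt_const κ (1:ℝ)).sub h1).add (hE.mul h3)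
  have : (fun κ => Pzκ lam (m+1) κ) =
      fun κ => 1 - Qsum (m+1) (κ * c * lam) + lam ^ (m+1) * Real.exp (κ * c * (1 - lam)) * Qsum (m+1) (κ * c) := by
    funext κ; simp [Pzκ, hc]
  rw [this]
  refine hfull.congr_deriv ?_
  have hexpc : Real.exp (κ * c * (1 - lam)) * Real.exp (-(κ * c)) = Real.exp (-(κ * c * lam)) := by
    rw [← Real.exp_add]; congr 1; ring
  have hpow : (κ * c * lam) ^ m = (κ * c) ^ m * lam ^ m := by
    rw [← mul_pow]
  have hf : (Nat.factorial m : ℝ) ≠ 0 := Nat.cast_ne_zero.2 (Nat.factorial_ne_zero m)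
  rw [hpow, ← hexpc]
  field_simp
  ring

theorem stmt19 (q : ℝ) (hq0 : 0 < q) (hq1 : q < 1/2) (p lam : ℝ)
    (hp : p = 1 - q) (hlam : lam = q / p) (z : ℕ) (hz : 1 ≤ z) :
    (∀ κ : ℝ, 0 < κ →
      HasDerivAt (fun κ => Pzκ lam z κ)
        (lam ^ z * z * (1 - lam) * Real.exp ((z : ℝ) * (1 - lam) * κ) *
          upperGamma (z : ℝ) (z * κ) / Real.Gamma (z : ℝ)) κ
      ∧ 0 < lam ^ z * z * (1 - lam) * Real.exp ((z : ℝ) * (1 - lam) * κ) *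
          upperGamma (z : ℝ) (z * κ) / Real.Gamma (z : ℝ))
    ∧ StrictMonoOn (fun κ => Pzκ lam z κ) (Set.Ioi 0) := by
  have hp0 : 0 < p := by rw [hp]; linarith
  have hlam0 : 0 < lam := by rw [hlam]; positivity
  have hlam1 : lam < 1 := by rw [hlam, div_lt_one hp0, hp]; linarith
  obtain ⟨m, rfl⟩ : ∃ m, z = m + 1 := ⟨z - 1, (Nat.succ_pred_eq_of_pos hz).symm⟩
  set c : ℝ := ((m+1:ℕ):ℝ) with hc
  have hf : (Nat.factorial m : ℝ) ≠ 0 := Nat.cast_ne_zero.2 (Nat.factorial_ne_zero m)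
  have hGamma : Real.Gamma c = (Nat.factorial m : ℝ) := by
    rw [show c = (m:ℝ) + 1 by rw [hc]; push_cast; ring, Real.Gamma_nat_eq_factorial]
  have main : ∀ κ : ℝ, 0 < κ →
      HasDerivAt (fun κ => Pzκ lam (m+1) κ)
        (lam ^ (m+1) * c * (1 - lam) * Real.exp (c * (1 - lam) * κ) *
          upperGamma c (c * κ) / Real.Gamma c) κ
      ∧ 0 < lam ^ (m+1) * c * (1 - lam) * Real.exp (c * (1 - lam) * κ) *
          upperGamma c (c * κ) / Real.Gamma c := by
    intro κ hκ
    have hcpos : 0 < c := by rw [hc]; positivity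
    have hx : 0 < c * κ := mul_pos hcpos hκ
    have hUG : upperGamma c (c * κ) = (Nat.factorial m : ℝ) * Qsum (m+1) (c * κ) := by
      have := upperGamma_eq (m+1) (by omega) (c * κ) hx
      simpa [hc] using this
    have hQpos : 0 < Qsum (m+1) (c * κ) := by
      unfold Qsum
      apply mul_pos (Real.exp_pos _)
      apply Finset.sum_pos' (fun k _ => by positivity)
      exact ⟨0, by simp, by norm_num⟩
    constructor
    · have hD := pz_hasDerivAt lam m κ
      convert hD using 1
      rw [hUG, hGamma, ← hc]
      rw [show Real.exp (c * (1 - lam) * κ) = Real.exp (κ * c * (1 - lam)) by congr 1; ring,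
        show Qsum (m+1) (c * κ) = Qsum (m+1) (κ * c) by rw [mul_comm]]
      field_simp
    · apply div_pos
      · apply mul_pos (mul_pos (mul_pos (mul_pos (by positivity) hcpos) (by linarith)) (Real.exp_pos _))
        rw [hUG]
        positivity
      · rw [hGamma]; positivity
  refine ⟨main, ?_⟩
  apply strictMonoOn_of_deriv_pos (convex_Ioi 0)
  · apply Continuous.continuousOn
    unfold Pzκ Qsum
    fun_prop
  · intro κ hκ
    rw [interior_Ioi] at hκ
    rw [(main κ hκ).1.deriv]
    exact (main κ hκ).2
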